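/- arXiv:1106.5635 — 2 statements merged into one kernel-verified Lean document; each statement's English description precedes it below -/
import Mathlib

section
/- Let B ⊂ ℝ^d be a convex body and define r_B(C) = sup{h ≥ 0 : ∃ t, hB + t ⊆ C} for convex C (and −∞ if C is empty). Let C₁, …, C_m be convex bodies in ℝ^d. Then the function (y₁, …, y_m) ↦ r_B((C₁ + y₁) ∩ (C₂ + y₂) ∩ ⋯ ∩ (C_m + y_m)) is a concave function on the set of (y₁, …, y_m) ∈ (ℝ^d)^m where the intersection is nonempty. -/
/-- The inradius of `C` relative to the convex body `B`: the supremum of homothety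
coefficients `h ≥ 0` such that a translate of `hB` fits inside `C`
(real-valued; the sets considered here are nonempty and bounded). -/
noncomputable def relInradius {d : ℕ} (B C : Set (EuclideanSpace ℝ (Fin d))) : ℝ :=
  sSup {h : ℝ | 0 ≤ h ∧ ∃ t : EuclideanSpace ℝ (Fin d), (fun b => h • b + t) '' B ⊆ C}

lemma comb_sSup_le {S₁ S₂ S₃ : Set ℝ} {t : ℝ} (ht0 : 0 ≤ t) (ht1 : t ≤ 1)
    (h₁ : S₁.Nonempty) (h₂ : S₂.Nonempty) (h₃ : BddAbove S₃)
    (key : ∀ a ∈ S₁, ∀ b ∈ S₂, t * a + (1 - t) * b ∈ S₃) :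
    t * sSup S₁ + (1 - t) * sSup S₂ ≤ sSup S₃ := by
  rcases eq_or_lt_of_le ht0 with rfl | ht
  · obtain ⟨a, ha⟩ := h₁
    have : sSup S₂ ≤ sSup S₃ := csSup_le h₂ fun b hb => by
      have := le_csSup h₃ (key a ha b hb); linarith
    linarith
  · rcases eq_or_lt_of_le ht1 with rfl | ht1'
    · obtain ⟨b, hb⟩ := h₂
      have : sSup S₁ ≤ sSup S₃ := csSup_le h₁ fun a ha => by
        have := le_csSup h₃ (key a ha b hb); linarith
      linarith
    · have h1t : 0 < 1 - t := by linarith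
      have hb : ∀ b ∈ S₂, t * sSup S₁ + (1 - t) * b ≤ sSup S₃ := by
        intro b hbm
        have hs : sSup S₁ ≤ (sSup S₃ - (1 - t) * b) / t :=
          csSup_le h₁ fun a ha => by
            rw [le_div_iff₀ ht]
            have := le_csSup h₃ (key a ha b hbm)
            linarith
        have h2 : t * sSup S₁ ≤ t * ((sSup S₃ - (1 - t) * b) / t) :=
          mul_le_mul_of_nonneg_left hs ht0
        have h3 : t * ((sSup S₃ - (1 - t) * b) / t) = sSup S₃ - (1 - t) * b := by
          field_simp
        linarith
      have hs2 : sSup S₂ ≤ (sSup S₃ - t * sSup S₁) / (1 - t) :=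
        csSup_le h₂ fun b hbm => by
          rw [le_div_iff₀ h1t]
          have := hb b hbm
          linarith
      have h2 : (1 - t) * sSup S₂ ≤ (1 - t) * ((sSup S₃ - t * sSup S₁) / (1 - t)) :=
        mul_le_mul_of_nonneg_left hs2 (le_of_lt h1t)
      have h3 : (1 - t) * ((sSup S₃ - t * sSup S₁) / (1 - t)) = sSup S₃ - t * sSup S₁ := by
        field_simp
      linarith

lemma sSup_Ici_set {d : ℕ} (B : Set (EuclideanSpace ℝ (Fin d))) (X : Set (EuclideanSpace ℝ (Fin d)))
    (hX : ∀ h : ℝ, 0 ≤ h → ∃ τ : EuclideanSpace ℝ (Fin d), (fun b => h • b + τ) '' B ⊆ X) :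
    relInradius B X = 0 := by
  have hset : {h : ℝ | 0 ≤ h ∧ ∃ t : EuclideanSpace ℝ (Fin d), (fun b => h • b + t) '' B ⊆ X}
      = Set.Ici 0 := by
    ext h
    constructor
    · rintro ⟨h0, -⟩; exact h0
    · intro h0; exact ⟨h0, hX h h0⟩
  rw [relInradius, hset]
  exact Real.sSup_of_not_bddAbove (not_bddAbove_Ici 0)

theorem relInradius_inter_translates_concave (d m : ℕ)
    (B : Set (EuclideanSpace ℝ (Fin d)))
    (hBconv : Convex ℝ B) (hBcomp : IsCompact B) (hBint : (interior B).Nonempty)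
    (C : Fin m → Set (EuclideanSpace ℝ (Fin d)))
    (hCconv : ∀ i, Convex ℝ (C i)) (hCcomp : ∀ i, IsCompact (C i))
    (hCint : ∀ i, (interior (C i)).Nonempty)
    (y₁ y₂ : Fin m → EuclideanSpace ℝ (Fin d)) (t : ℝ) (ht0 : 0 ≤ t) (ht1 : t ≤ 1)
    (h₁ : (⋂ i, (fun c => c + y₁ i) '' C i).Nonempty)
    (h₂ : (⋂ i, (fun c => c + y₂ i) '' C i).Nonempty) :
    t * relInradius B (⋂ i, (fun c => c + y₁ i) '' C i)
      + (1 - t) * relInradius B (⋂ i, (fun c => c + y₂ i) '' C i)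
    ≤ relInradius B (⋂ i, (fun c => c + (t • y₁ i + (1 - t) • y₂ i)) '' C i) := by
  have hBne : B.Nonempty := hBint.mono interior_subset
  have hCne : ∀ i, (C i).Nonempty := fun i => (hCint i).mono interior_subset
  -- degenerate case m = 0
  rcases Nat.eq_zero_or_pos m with hm | hm
  · subst hm
    have hu : ∀ y : Fin 0 → EuclideanSpace ℝ (Fin 0 → ℝ), True := fun _ => trivial
    have e : ∀ y : Fin 0 → EuclideanSpace ℝ (Fin d),
        (⋂ i, (fun c => c + y i) '' C i) = Set.univ := fun y => Set.iInter_of_empty _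
    rw [e, e, e]
    have h0 : relInradius B (Set.univ : Set (EuclideanSpace ℝ (Fin d))) = 0 :=
      sSup_Ici_set B _ (fun h h0 => ⟨0, Set.subset_univ _⟩)
    rw [h0]
    linarith
  -- degenerate case d = 0
  rcases Nat.eq_zero_or_pos d with hd | hd
  · subst hd
    haveI : Subsingleton (EuclideanSpace ℝ (Fin 0)) :=
      ⟨fun a b => by ext i; exact i.elim0⟩
    have hz : ∀ (X : Set (EuclideanSpace ℝ (Fin 0))), X.Nonempty → relInradius B X = 0 := by
      intro X hX
      refine sSup_Ici_set B X fun h h0 => ⟨0, ?_⟩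
      intro p hp
      obtain ⟨x, hx⟩ := hX
      rwa [Subsingleton.elim p x]
    have h₃ne : (⋂ i, (fun c => c + (t • y₁ i + (1 - t) • y₂ i)) '' C i).Nonempty := by
      refine ⟨0, Set.mem_iInter.2 fun i => ?_⟩
      obtain ⟨c, hc⟩ := hCne i
      exact ⟨c, hc, Subsingleton.elim _ _⟩
    rw [hz _ h₁, hz _ h₂, hz _ h₃ne]
    linarith
  -- main case
  have i0 : Fin m := ⟨0, hm⟩
  haveI : Nonempty (Fin d) := ⟨⟨0, hd⟩⟩
  -- the three defining sets
  set S : (Fin m → EuclideanSpace ℝ (Fin d)) → Set ℝ := fun y =>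
    {h : ℝ | 0 ≤ h ∧ ∃ τ : EuclideanSpace ℝ (Fin d),
      (fun b => h • b + τ) '' B ⊆ ⋂ i, (fun c => c + y i) '' C i} with hS
  have hrel : ∀ y : Fin m → EuclideanSpace ℝ (Fin d),
      relInradius B (⋂ i, (fun c => c + y i) '' C i) = sSup (S y) := fun y => rfl
  rw [hrel y₁, hrel y₂, hrel (fun i => t • y₁ i + (1 - t) • y₂ i)]
  -- zero membership
  have hzero : ∀ (y : Fin m → EuclideanSpace ℝ (Fin d)),
      (⋂ i, (fun c => c + y i) '' C i).Nonempty → (0 : ℝ) ∈ S y := by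
    intro y hy
    obtain ⟨p, hp⟩ := hy
    refine ⟨le_refl 0, p, ?_⟩
    rintro q ⟨x, hx, rfl⟩
    simpa using hp
  -- key combination property
  have key : ∀ a ∈ S y₁, ∀ b ∈ S y₂,
      t * a + (1 - t) * b ∈ S (fun i => t • y₁ i + (1 - t) • y₂ i) := by
    rintro a ⟨ha0, τa, hA⟩ b ⟨hb0, τb, hB⟩
    refine ⟨add_nonneg (mul_nonneg ht0 ha0) (mul_nonneg (by linarith) hb0),
      t • τa + (1 - t) • τb, ?_⟩
    rintro q ⟨x, hx, rfl⟩
    rw [Set.mem_iInter]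
    intro i
    have m1 : a • x + τa ∈ (fun c => c + y₁ i) '' C i :=
      Set.mem_iInter.1 (hA (Set.mem_image_of_mem _ hx)) i
    have m2 : b • x + τb ∈ (fun c => c + y₂ i) '' C i :=
      Set.mem_iInter.1 (hB (Set.mem_image_of_mem _ hx)) i
    obtain ⟨c₁, hc₁, e₁⟩ := m1
    obtain ⟨c₂, hc₂, e₂⟩ := m2
    refine ⟨t • c₁ + (1 - t) • c₂, hCconv i hc₁ hc₂ ht0 (by linarith) (by ring), ?_⟩
    show t • c₁ + (1 - t) • c₂ + (t • y₁ i + (1 - t) • y₂ i)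
        = (t * a + (1 - t) * b) • x + (t • τa + (1 - t) • τb)
    have e1 : (c₁ + y₁ i : EuclideanSpace ℝ (Fin d)) = a • x + τa := e₁
    have e2 : (c₂ + y₂ i : EuclideanSpace ℝ (Fin d)) = b • x + τb := e₂
    calc t • c₁ + (1 - t) • c₂ + (t • y₁ i + (1 - t) • y₂ i)
        = t • (c₁ + y₁ i) + (1 - t) • (c₂ + y₂ i) := by module
      _ = t • (a • x + τa) + (1 - t) • (b • x + τb) := by rw [e1, e2]
      _ = (t * a + (1 - t) * b) • x + (t • τa + (1 - t) • τb) := by module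
  -- boundedness of the target set
  have hbdd : BddAbove (S (fun i => t • y₁ i + (1 - t) • y₂ i)) := by
    obtain ⟨x, hx⟩ := hBint
    obtain ⟨ε, hε, hball⟩ := Metric.isOpen_iff.1 isOpen_interior x hx
    obtain ⟨u, hu⟩ := exists_norm_eq (EuclideanSpace ℝ (Fin d)) (le_of_lt (half_pos hε))
    have hxB : x ∈ B := interior_subset hx
    have hxuB : x + u ∈ B := by
      apply interior_subset (hball ?_)
      rw [Metric.mem_ball, dist_eq_norm]
      simpa [hu] using half_lt_self hε
    have hK : Bornology.IsBounded ((fun c => c + (t • y₁ i0 + (1 - t) • y₂ i0)) '' C i0) :=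
      ((hCcomp i0).image (continuous_id.add continuous_const)).isBounded
    obtain ⟨R, hR⟩ := Metric.isBounded_iff.1 hK
    refine ⟨R / (ε / 2), ?_⟩
    rintro h ⟨h0, τ, hsub⟩
    have p1 : h • x + τ ∈ (fun c => c + (t • y₁ i0 + (1 - t) • y₂ i0)) '' C i0 :=
      Set.mem_iInter.1 (hsub (Set.mem_image_of_mem _ hxB)) i0
    have p2 : h • (x + u) + τ ∈ (fun c => c + (t • y₁ i0 + (1 - t) • y₂ i0)) '' C i0 :=
      Set.mem_iInter.1 (hsub (Set.mem_image_of_mem _ hxuB)) i0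
    have hdist : dist (h • x + τ) (h • (x + u) + τ) = h * (ε / 2) := by
      rw [dist_eq_norm]
      have : (h • x + τ) - (h • (x + u) + τ) = (-h) • u := by module
      rw [this, norm_smul]
      simp [hu, abs_of_nonneg h0]
    have := hR p1 p2
    rw [hdist] at this
    rw [le_div_iff₀ (half_pos hε)]
    exact this
  exact comb_sSup_le ht0 ht1 ⟨0, hzero y₁ h₁⟩ ⟨0, hzero y₂ h₂⟩ hbdd key
end

section
/- Let B ⊂ ℝ^d be a convex body, and let C₁ = {x ∈ B : λ(x) ≤ 0} and C₂ = {x ∈ B : λ(x) ≥ 0} be the two pieces of B cut by a hyperplane {λ = 0}, where λ is a nonconstant affine function. Then r_B(C₁) + r_B(C₂) ≥ 1, where r_B(C) = sup{h ≥ 0 : ∃ t, hB + t ⊆ C}. -/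
theorem hyperplane_cut_inradius_sum (d : ℕ)
    (B : Set (EuclideanSpace ℝ (Fin d)))
    (hBconv : Convex ℝ B) (hBcomp : IsCompact B) (hBint : (interior B).Nonempty)
    (lam : EuclideanSpace ℝ (Fin d) →ᵃ[ℝ] ℝ) (hlam : lam.linear ≠ 0) :
    1 ≤ relInradius B {x ∈ B | lam x ≤ 0} + relInradius B {x ∈ B | 0 ≤ lam x} := by
  classical
  obtain ⟨x₀, hx₀⟩ := hBint
  have hx₀B : x₀ ∈ B := interior_subset hx₀
  have hBne : B.Nonempty := ⟨x₀, hx₀B⟩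
  have hcont : Continuous lam := lam.continuous_of_finiteDimensional
  obtain ⟨xm, hxmB, hxm⟩ := hBcomp.exists_isMinOn hBne hcont.continuousOn
  obtain ⟨xM, hxMB, hxM⟩ := hBcomp.exists_isMaxOn hBne hcont.continuousOn
  set m := lam xm with hmdef
  set M := lam xM with hMdef
  have hm : ∀ x ∈ B, m ≤ lam x := fun x hx => hxm hx
  have hM : ∀ x ∈ B, lam x ≤ M := fun x hx => hxM hx
  -- key affine computation
  have key : ∀ (h : ℝ) (t x : EuclideanSpace ℝ (Fin d)), lam (h • x + t) = h * lam.linear x + lam t := by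
    intro h t x
    have := lam.map_vadd t (h • x)
    simpa [vadd_eq_add, smul_eq_mul, map_smul] using this
  -- nonconstancy: m < M
  have hmM : m < M := by
    obtain ⟨v, hv⟩ : ∃ v, lam.linear v ≠ 0 := by
      by_contra h
      push_neg at h
      exact hlam (LinearMap.ext fun v => h v)
    have hv0 : (0:ℝ) < ‖v‖ := by
      rcases eq_or_ne v 0 with rfl | hne
      · exact absurd (map_zero lam.linear) hv
      · exact norm_pos_iff.2 hne
    obtain ⟨ε, hε, hball⟩ := Metric.isOpen_iff.1 isOpen_interior x₀ hx₀
    set c := ε / (2 * ‖v‖) with hcdef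
    have hc : 0 < c := div_pos hε (by positivity)
    have hdist : ∀ s : ℝ, |s| = 1 → (s * c) • v + x₀ ∈ B := by
      intro s hs
      apply interior_subset (hball ?_)
      have : dist ((s * c) • v + x₀) x₀ = c * ‖v‖ := by
        rw [dist_eq_norm]
        simp [norm_smul, abs_mul, hs, abs_of_pos hc]
      rw [Metric.mem_ball, this, hcdef]
      rw [div_mul_eq_mul_div]
      rw [div_lt_iff₀ (by positivity)]
      nlinarith
    have hp : (c:ℝ) • v + x₀ ∈ B := by
      have := hdist 1 (by norm_num)
      simpa using this
    have hq : ((-c):ℝ) • v + x₀ ∈ B := by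
      have := hdist (-1) (by norm_num)
      simpa using this
    have e1 : lam (c • v + x₀) = c * lam.linear v + lam x₀ := key c x₀ v
    have e2 : lam ((-c) • v + x₀) = (-c) * lam.linear v + lam x₀ := key (-c) x₀ v
    rcases lt_or_gt_of_ne hv with hneg | hpos
    · have h1 : lam (c • v + x₀) < lam ((-c) • v + x₀) := by
        rw [e1, e2]; nlinarith
      calc m ≤ lam (c • v + x₀) := hm _ hp
        _ < lam ((-c) • v + x₀) := h1
        _ ≤ M := hM _ hq
    · have h1 : lam ((-c) • v + x₀) < lam (c • v + x₀) := by
        rw [e1, e2]; nlinarith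
      calc m ≤ lam ((-c) • v + x₀) := hm _ hq
        _ < lam (c • v + x₀) := h1
        _ ≤ M := hM _ hp
  have hMm : (0:ℝ) < M - m := sub_pos.2 hmM
  -- boundedness
  have hbdd : ∀ C : Set (EuclideanSpace ℝ (Fin d)), C ⊆ B →
      BddAbove {h : ℝ | 0 ≤ h ∧ ∃ t : EuclideanSpace ℝ (Fin d), (fun b => h • b + t) '' B ⊆ C} := by
    intro C hCB
    refine ⟨1, fun h hh => ?_⟩
    obtain ⟨hh0, t, ht⟩ := hh
    have h1 : h • xM + t ∈ B := hCB (ht ⟨xM, hxMB, rfl⟩)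
    have h2 : h • xm + t ∈ B := hCB (ht ⟨xm, hxmB, rfl⟩)
    have e1 : h * lam.linear xM + lam t ≤ M := by rw [← key]; exact hM _ h1
    have e2 : m ≤ h * lam.linear xm + lam t := by rw [← key]; exact hm _ h2
    have eM : lam xM = lam.linear xM + lam 0 := by
      have := key 1 0 xM; simpa using this
    have em : lam xm = lam.linear xm + lam 0 := by
      have := key 1 0 xm; simpa using this
    have hsub : lam.linear xM - lam.linear xm = M - m := by
      rw [hMdef, hmdef, eM, em]; ring
    have : h * (M - m) ≤ M - m := by nlinarith
    nlinarith
  -- nonnegativity of relInradius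
  have hnn : ∀ C : Set (EuclideanSpace ℝ (Fin d)), 0 ≤ relInradius B C := by
    intro C
    exact Real.sSup_nonneg fun h hh => hh.1
  -- membership helper: homothety with ratio h centered at x ∈ B stays in B, values controlled
  have hmemB : ∀ (h : ℝ) (x : EuclideanSpace ℝ (Fin d)), 0 ≤ h → h ≤ 1 → x ∈ B → ∀ b ∈ B,
      h • b + (1 - h) • x ∈ B := by
    intro h x h0 h1 hxB b hbB
    exact hBconv hbB hxB h0 (by linarith) (by ring)
  have hcombo : ∀ (h : ℝ) (x b : EuclideanSpace ℝ (Fin d)), lam (h • b + (1 - h) • x)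
      = h * lam b + (1 - h) * lam x := by
    intro h x b
    have := Convex.combo_affine_apply (f := lam) (x := b) (y := x) (a := h) (b := 1 - h)
      (by ring)
    simpa [smul_eq_mul] using this
  -- a general lemma: h in the defining set implies h ≤ relInradius
  have hle : ∀ (C : Set (EuclideanSpace ℝ (Fin d))), C ⊆ B → ∀ (h : ℝ) (t : EuclideanSpace ℝ (Fin d)), 0 ≤ h →
      (fun b => h • b + t) '' B ⊆ C → h ≤ relInradius B C := by
    intro C hCB h t h0 hsub
    exact le_csSup (hbdd C hCB) ⟨h0, t, hsub⟩
  have hC1B : {x ∈ B | lam x ≤ 0} ⊆ B := fun x hx => hx.1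
  have hC2B : {x ∈ B | 0 ≤ lam x} ⊆ B := fun x hx => hx.1
  rcases le_or_gt M 0 with hM0 | hM0
  · -- B = C₁, ratio 1
    have h1 : (1:ℝ) ≤ relInradius B {x ∈ B | lam x ≤ 0} := by
      apply hle _ hC1B 1 0 zero_le_one
      rintro y ⟨b, hbB, rfl⟩
      simp only [one_smul, add_zero]
      exact ⟨hbB, le_trans (hM b hbB) hM0⟩
    have h2 := hnn {x ∈ B | 0 ≤ lam x}
    linarith
  rcases le_or_gt 0 m with hm0 | hm0
  · -- B = C₂, ratio 1
    have h1 : (1:ℝ) ≤ relInradius B {x ∈ B | 0 ≤ lam x} := by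
      apply hle _ hC2B 1 0 zero_le_one
      rintro y ⟨b, hbB, rfl⟩
      simp only [one_smul, add_zero]
      exact ⟨hbB, le_trans hm0 (hm b hbB)⟩
    have h2 := hnn {x ∈ B | lam x ≤ 0}
    linarith
  -- main case: m < 0 < M
  set h₁ := -m / (M - m) with h₁def
  set h₂ := M / (M - m) with h₂def
  have h₁0 : 0 ≤ h₁ := div_nonneg (by linarith) (le_of_lt hMm)
  have h₂0 : 0 ≤ h₂ := div_nonneg (le_of_lt hM0) (le_of_lt hMm)
  have h₁1 : h₁ ≤ 1 := by rw [h₁def, div_le_one hMm]; linarith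
  have h₂1 : h₂ ≤ 1 := by rw [h₂def, div_le_one hMm]; linarith
  have hsum : h₁ + h₂ = 1 := by
    rw [h₁def, h₂def, ← add_div, neg_add_eq_sub, div_self (ne_of_gt hMm)]
  have hval1 : h₁ * M + (1 - h₁) * m = 0 := by
    rw [h₁def]
    field_simp [ne_of_gt hMm]
    ring
  have hval2 : h₂ * m + (1 - h₂) * M = 0 := by
    rw [h₂def]
    field_simp [ne_of_gt hMm]
    ring
  have hr1 : h₁ ≤ relInradius B {x ∈ B | lam x ≤ 0} := by
    apply hle _ hC1B h₁ ((1 - h₁) • xm) h₁0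
    rintro y ⟨b, hbB, rfl⟩
    refine ⟨hmemB h₁ xm h₁0 h₁1 hxmB b hbB, ?_⟩
    rw [hcombo h₁ xm b]
    have hb : lam b ≤ M := hM b hbB
    nlinarith [mul_le_mul_of_nonneg_left hb h₁0]
  have hr2 : h₂ ≤ relInradius B {x ∈ B | 0 ≤ lam x} := by
    apply hle _ hC2B h₂ ((1 - h₂) • xM) h₂0
    rintro y ⟨b, hbB, rfl⟩
    refine ⟨hmemB h₂ xM h₂0 h₂1 hxMB b hbB, ?_⟩
    rw [hcombo h₂ xM b]
    have hb : m ≤ lam b := hm b hbB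
    nlinarith [mul_le_mul_of_nonneg_left hb h₂0]
  linarith
end
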